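/- Let n ≥ 2 and work in the field ℚ(x_1,…,x_n). For 1 ≤ i ≤ n define L_i = (1/(x_i x_{i+1} ⋯ x_n)) · [1,1] · diag(1, x_{i-1}) · (∏_{j=i}^{n-1} [[x_{j+1},0],[1,x_j]]) · [1;1]ᵗ, with the convention x_0 = 1, and set L_{n+1} = 1. Then for every 1 ≤ i ≤ n one has x_i · L_i − x_{i-1} · L_{i+1} = 1. -/

import Mathlib

open Matrix

noncomputable section

abbrev KK := FractionRing (MvPolynomial ℕ ℚ)

def AA (x : ℕ → KK) (i k : ℕ) : Matrix (Fin 2) (Fin 2) KK :=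
  ((List.range' i k).map fun j => !![x (j + 1), 0; 1, x j]).prod

lemma AA_succ (x : ℕ → KK) (i k : ℕ) :
    AA x i (k + 1) = !![x (i + 1), 0; 1, x i] * AA x (i + 1) k := by
  simp [AA, List.range'_succ]

lemma AA_top (x : ℕ → KK) : ∀ k i, (AA x i k) 0 0 = ∏ j ∈ Finset.Icc (i + 1) (i + k), x j ∧
    (AA x i k) 0 1 = 0 := by
  intro k
  induction k with
  | zero => intro i; simp [AA, Matrix.one_apply]
  | succ k ih =>
    intro i
    obtain ⟨h0, h1⟩ := ih (i + 1)
    have h00 : (AA x i (k + 1)) 0 0 = x (i + 1) * (AA x (i + 1) k) 0 0 := by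
      rw [AA_succ, Matrix.mul_apply, Fin.sum_univ_two]; simp
    have h01 : (AA x i (k + 1)) 0 1 = x (i + 1) * (AA x (i + 1) k) 0 1 := by
      rw [AA_succ, Matrix.mul_apply, Fin.sum_univ_two]; simp
    refine ⟨?_, by rw [h01, h1, mul_zero]⟩
    rw [h00, h0, show i + (k + 1) = i + 1 + k by omega,
      ← Finset.mul_prod_Ioc_eq_prod_Icc (show i + 1 ≤ i + 1 + k by omega), ← Finset.Icc_add_one_left_eq_Ioc]

lemma entry_eq (c : KK) (B : Matrix (Fin 2) (Fin 2) KK) :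
    (!![(1 : KK), 1] * !![1, 0; 0, c] * B * !![(1 : KK); 1]) 0 0 =
      B 0 0 + B 0 1 + c * (B 1 0 + B 1 1) := by
  simp [Matrix.mul_apply, Fin.sum_univ_two, Matrix.vecMul, dotProduct, Matrix.vecHead, Matrix.vecTail]
  ring

theorem stmt_7 (n : ℕ) (hn : 2 ≤ n)
    (x : ℕ → FractionRing (MvPolynomial ℕ ℚ))
    (hx0 : x 0 = 1)
    (hx : ∀ i, 1 ≤ i →
      x i = algebraMap (MvPolynomial ℕ ℚ) (FractionRing (MvPolynomial ℕ ℚ)) (MvPolynomial.X i))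
    (L : ℕ → FractionRing (MvPolynomial ℕ ℚ))
    (hL : ∀ i, 1 ≤ i → i ≤ n →
      L i = (∏ j ∈ Finset.Icc i n, x j)⁻¹ *
        ((!![(1 : FractionRing (MvPolynomial ℕ ℚ)), 1] * !![1, 0; 0, x (i - 1)] *
            ((List.range' i (n - i)).map fun j => !![x (j + 1), 0; 1, x j]).prod *
            !![(1 : FractionRing (MvPolynomial ℕ ℚ)); 1]) 0 0))
    (hL' : L (n + 1) = 1) :
    ∀ i, 1 ≤ i → i ≤ n → x i * L i - x (i - 1) * L (i + 1) = 1 := by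
  have hxne : ∀ j, x j ≠ 0 := by
    intro j
    rcases Nat.eq_zero_or_pos j with h | h
    · simp [h, hx0]
    · rw [hx j h]
      exact fun hc => MvPolynomial.X_ne_zero j
        (IsFractionRing.injective (MvPolynomial ℕ ℚ) KK (by simpa using hc))
  intro i h1 h2
  rcases eq_or_lt_of_le h2 with rfl | hlt
  · -- i = n
    rw [hL i h1 le_rfl, hL']
    rw [show ((List.range' i (i - i)).map fun j => !![x (j + 1), 0; 1, x j]).prod = AA x i 0 by
      rw [Nat.sub_self i]; rfl]
    rw [entry_eq]
    have e0 : (AA x i 0) 0 0 = 1 := by simp [AA, Matrix.one_apply]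
    have e1 : (AA x i 0) 0 1 = 0 := by simp [AA, Matrix.one_apply]
    have e2 : (AA x i 0) 1 0 = 0 := by simp [AA, Matrix.one_apply]
    have e3 : (AA x i 0) 1 1 = 1 := by simp [AA, Matrix.one_apply]
    rw [e0, e1, e2, e3, Finset.Icc_self, Finset.prod_singleton]
    field_simp [hxne i]
    ring
  · -- i < n
    have hi1 : 1 ≤ i + 1 := by omega
    have hi2 : i + 1 ≤ n := hlt
    rw [hL i h1 h2, hL (i + 1) hi1 hi2]
    rw [show ((List.range' i (n - i)).map fun j => !![x (j + 1), 0; 1, x j]).prod =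
        AA x i ((n - i - 1) + 1) by rw [show n - i = (n - i - 1) + 1 by omega]; rfl]
    rw [show ((List.range' (i + 1) (n - (i + 1))).map fun j => !![x (j + 1), 0; 1, x j]).prod =
        AA x (i + 1) (n - i - 1) by rw [show n - (i + 1) = n - i - 1 by omega]; rfl]
    rw [AA_succ, entry_eq, entry_eq, show i + 1 - 1 = i by omega]
    obtain ⟨hB00, hB01⟩ := AA_top x (n - i - 1) (i + 1)
    have hPfull : ∏ j ∈ Finset.Icc i n, x j = x i * ∏ j ∈ Finset.Icc (i + 1) n, x j := by
      rw [← Finset.mul_prod_Ioc_eq_prod_Icc h2, ← Finset.Icc_add_one_left_eq_Ioc]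
    have hP2 : ∏ j ∈ Finset.Icc (i + 1) n, x j =
        x (i + 1) * ∏ j ∈ Finset.Icc (i + 1 + 1) n, x j := by
      rw [← Finset.mul_prod_Ioc_eq_prod_Icc hi2, ← Finset.Icc_add_one_left_eq_Ioc]
    have hBval : (AA x (i + 1) (n - i - 1)) 0 0 = ∏ j ∈ Finset.Icc (i + 1 + 1) n, x j := by
      rw [hB00, show i + 1 + (n - i - 1) = n by omega]
    have m00 : (!![x (i + 1), 0; 1, x i] * AA x (i + 1) (n - i - 1)) 0 0 =
        x (i + 1) * (AA x (i + 1) (n - i - 1)) 0 0 := by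
      rw [Matrix.mul_apply, Fin.sum_univ_two]; simp
    have m01 : (!![x (i + 1), 0; 1, x i] * AA x (i + 1) (n - i - 1)) 0 1 =
        x (i + 1) * (AA x (i + 1) (n - i - 1)) 0 1 := by
      rw [Matrix.mul_apply, Fin.sum_univ_two]; simp
    have m10 : (!![x (i + 1), 0; 1, x i] * AA x (i + 1) (n - i - 1)) 1 0 =
        (AA x (i + 1) (n - i - 1)) 0 0 + x i * (AA x (i + 1) (n - i - 1)) 1 0 := by
      rw [Matrix.mul_apply, Fin.sum_univ_two]; simp
    have m11 : (!![x (i + 1), 0; 1, x i] * AA x (i + 1) (n - i - 1)) 1 1 =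
        (AA x (i + 1) (n - i - 1)) 0 1 + x i * (AA x (i + 1) (n - i - 1)) 1 1 := by
      rw [Matrix.mul_apply, Fin.sum_univ_two]; simp
    rw [m00, m01, m10, m11, hPfull, hP2, hB01, hBval]
    have hPne : (∏ j ∈ Finset.Icc (i + 1 + 1) n, x j) ≠ 0 :=
      Finset.prod_ne_zero_iff.mpr fun j _ => hxne j
    set P := ∏ j ∈ Finset.Icc (i + 1 + 1) n, x j
    set b10 := (AA x (i + 1) (n - i - 1)) 1 0
    set b11 := (AA x (i + 1) (n - i - 1)) 1 1
    field_simp [hxne i, hxne (i + 1)]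
    ring
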